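/- Let p be an odd prime and n ≥ 1. If K is a closed subgroup of SL_n(ℤ_p) whose image under the reduction map SL_n(ℤ_p) → SL_n(ℤ/p²ℤ) is all of SL_n(ℤ/p²ℤ), then K = SL_n(ℤ_p). (Lemma 2.2.1(a) instantiated at G = SL_n over ℤ_p.) -/

import Mathlib

open Matrix Finset

namespace Stmt2Aux

variable {p : ℕ} [Fact p.Prime] {n : ℕ}

/-- All entries divisible by `p ^ m`. -/
def MD (p : ℕ) [Fact p.Prime] {n : ℕ} (m : ℕ) (M : Matrix (Fin n) (Fin n) ℤ_[p]) : Prop :=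
  ∀ i j, (p : ℤ_[p]) ^ m ∣ M i j

namespace MD

theorem mono {m m' : ℕ} (h : m' ≤ m) {M : Matrix (Fin n) (Fin n) ℤ_[p]} (hM : MD p m M) : MD p m' M :=
  fun i j => (pow_dvd_pow _ h).trans (hM i j)

theorem add {m : ℕ} {M N : Matrix (Fin n) (Fin n) ℤ_[p]} (hM : MD p m M) (hN : MD p m N) : MD p m (M + N) :=
  fun i j => by simpa [Matrix.add_apply] using dvd_add (hM i j) (hN i j)

theorem sub {m : ℕ} {M N : Matrix (Fin n) (Fin n) ℤ_[p]} (hM : MD p m M) (hN : MD p m N) : MD p m (M - N) :=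
  fun i j => by simpa [Matrix.sub_apply] using dvd_sub (hM i j) (hN i j)

theorem neg {m : ℕ} {M : Matrix (Fin n) (Fin n) ℤ_[p]} (hM : MD p m M) : MD p m (-M) :=
  fun i j => by simpa [Matrix.neg_apply] using (dvd_neg).mpr (hM i j)

theorem mul_right {m : ℕ} {M : Matrix (Fin n) (Fin n) ℤ_[p]} (hM : MD p m M) (N) : MD p m (M * N) := fun i j => by
  rw [Matrix.mul_apply]
  exact Finset.dvd_sum fun k _ => (hM i k).mul_right _

theorem mul_left {m : ℕ} {N : Matrix (Fin n) (Fin n) ℤ_[p]} (hN : MD p m N) (M) : MD p m (M * N) := fun i j => by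
  rw [Matrix.mul_apply]
  exact Finset.dvd_sum fun k _ => (hN k j).mul_left _

theorem mul {a b : ℕ} {M N : Matrix (Fin n) (Fin n) ℤ_[p]} (hM : MD p a M) (hN : MD p b N) : MD p (a + b) (M * N) := fun i j => by
  rw [Matrix.mul_apply, pow_add]
  exact Finset.dvd_sum fun k _ => mul_dvd_mul (hM i k) (hN k j)

theorem smul {m : ℕ} {M : Matrix (Fin n) (Fin n) ℤ_[p]} (c : ℤ_[p]) (hM : MD p m M) : MD p m (c • M) := fun i j => by
  rw [Matrix.smul_apply, smul_eq_mul]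
  exact (hM i j).mul_left c

theorem smul_pow (m : ℕ) (M : Matrix (Fin n) (Fin n) ℤ_[p]) :
    MD p m ((p : ℤ_[p]) ^ m • M) := fun i j => by
  rw [Matrix.smul_apply, smul_eq_mul]
  exact Dvd.intro _ rfl

theorem p_smul {a : ℕ} {M : Matrix (Fin n) (Fin n) ℤ_[p]} (hM : MD p a M) : MD p (a + 1) ((p : ℤ_[p]) • M) := fun i j => by
  rw [Matrix.smul_apply, smul_eq_mul, pow_succ, mul_comm ((p:ℤ_[p])^a)]
  exact mul_dvd_mul dvd_rfl (hM i j)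

theorem sum {m : ℕ} {ι : Type*} {s : Finset ι} {f : ι → Matrix (Fin n) (Fin n) ℤ_[p]}
    (h : ∀ i ∈ s, MD p m (f i)) : MD p m (∑ i ∈ s, f i) := fun i j => by
  rw [Matrix.sum_apply]
  exact Finset.dvd_sum fun k hk => h k hk i j

theorem pow_ge {a} {X : Matrix (Fin n) (Fin n) ℤ_[p]} (hX : MD p a X) (k j : ℕ) :
    MD p (k * a) (X ^ (k + j)) := by
  induction k with
  | zero => intro i j; simpa using one_dvd ((X ^ (0 + j)) i j)
  | succ k ih =>
      have : X ^ (k + 1 + j) = X ^ (k + j) * X := by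
        rw [← pow_succ]; ring_nf
      rw [this, Nat.succ_mul]
      exact ih.mul hX

theorem exists_fac {m} {M : Matrix (Fin n) (Fin n) ℤ_[p]} (h : MD p m M) :
    ∃ A, M = (p : ℤ_[p]) ^ m • A := by
  refine ⟨Matrix.of fun i j => (h i j).choose, ?_⟩
  ext i j
  rw [Matrix.smul_apply, smul_eq_mul]
  exact (h i j).choose_spec

end MD

open Matrix.SpecialLinearGroup in
theorem base (K : Subgroup (SpecialLinearGroup (Fin n) ℤ_[p]))
    (hsurj : ∀ g : Matrix.SpecialLinearGroup (Fin n) (ZMod (p ^ 2)),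
      ∃ k ∈ K, Matrix.SpecialLinearGroup.map (PadicInt.toZModPow 2) k = g)
    (g : SpecialLinearGroup (Fin n) ℤ_[p]) :
    ∃ x ∈ K, MD p 2 ((g : Matrix (Fin n) (Fin n) ℤ_[p]) - (x : Matrix (Fin n) (Fin n) ℤ_[p])) := by
  obtain ⟨k, hkK, hk⟩ := hsurj (Matrix.SpecialLinearGroup.map (PadicInt.toZModPow 2) g)
  refine ⟨k, hkK, fun i j => ?_⟩
  have h1 : (PadicInt.toZModPow (p := p) 2) ((k : Matrix (Fin n) (Fin n) ℤ_[p]) i j)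
      = (PadicInt.toZModPow 2) ((g : Matrix (Fin n) (Fin n) ℤ_[p]) i j) := by
    have := congrArg (fun M : SpecialLinearGroup (Fin n) (ZMod (p ^ 2)) =>
      (M : Matrix (Fin n) (Fin n) (ZMod (p ^ 2))) i j) hk
    simpa [Matrix.SpecialLinearGroup.map_apply_coe, Matrix.map_apply] using this
  have h2 : (PadicInt.toZModPow (p := p) 2)
      (((g : Matrix (Fin n) (Fin n) ℤ_[p]) - k) i j) = 0 := by
    rw [Matrix.sub_apply, map_sub, h1, sub_self]
  rw [← RingHom.mem_ker, PadicInt.ker_toZModPow, Ideal.mem_span_singleton] at h2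
  exact h2


theorem key_step (hp3 : 3 ≤ p) (hn : 1 ≤ n) {m : ℕ} (hm : 2 ≤ m)
    (K : Subgroup (SpecialLinearGroup (Fin n) ℤ_[p]))
    (IH : ∀ g : SpecialLinearGroup (Fin n) ℤ_[p], ∃ x ∈ K,
      MD p m ((g : Matrix (Fin n) (Fin n) ℤ_[p]) - (x : Matrix (Fin n) (Fin n) ℤ_[p])))
    (g : SpecialLinearGroup (Fin n) ℤ_[p]) :
    ∃ x ∈ K, MD p (m + 1)
      ((g : Matrix (Fin n) (Fin n) ℤ_[p]) - (x : Matrix (Fin n) (Fin n) ℤ_[p])) := by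
  obtain ⟨x, hxK, hx⟩ := IH g
  set π : ℤ_[p] := (p : ℤ_[p]) with hπ
  have hπ1 : (1:ℝ) < (p : ℝ) := by exact_mod_cast (by omega : 1 < p)
  -- E := g * x⁻¹ is ≡ 1 mod p^m
  have hxinv : (x : Matrix (Fin n) (Fin n) ℤ_[p]) * ((x⁻¹ : SpecialLinearGroup (Fin n) ℤ_[p]) :
      Matrix (Fin n) (Fin n) ℤ_[p]) = 1 := by
    rw [← Matrix.SpecialLinearGroup.coe_mul, mul_inv_cancel, Matrix.SpecialLinearGroup.coe_one]
  have hE : MD p m (((g * x⁻¹ : SpecialLinearGroup (Fin n) ℤ_[p]) :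
      Matrix (Fin n) (Fin n) ℤ_[p]) - 1) := by
    have heq : ((g * x⁻¹ : SpecialLinearGroup (Fin n) ℤ_[p]) :
        Matrix (Fin n) (Fin n) ℤ_[p]) - 1
        = ((g : Matrix (Fin n) (Fin n) ℤ_[p]) - (x : Matrix (Fin n) (Fin n) ℤ_[p])) *
          ((x⁻¹ : SpecialLinearGroup (Fin n) ℤ_[p]) : Matrix (Fin n) (Fin n) ℤ_[p]) := by
      rw [Matrix.SpecialLinearGroup.coe_mul, Matrix.sub_mul, hxinv]
    rw [heq]
    exact hx.mul_right _
  obtain ⟨A, hA⟩ := hE.exists_fac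
  have hEeq : ((g * x⁻¹ : SpecialLinearGroup (Fin n) ℤ_[p]) : Matrix (Fin n) (Fin n) ℤ_[p])
      = 1 + π ^ m • A := by
    rw [← hA]; abel
  -- trace A is divisible by p^m
  have hπm0 : ∀ r : ℕ, (π : ℤ_[p]) ^ r ≠ 0 := fun r =>
    pow_ne_zero _ (Nat.cast_ne_zero.mpr (by omega))
  have htrA : π ^ m ∣ Matrix.trace A := by
    have hdet := (g * x⁻¹ : SpecialLinearGroup (Fin n) ℤ_[p]).prop
    rw [hEeq, Matrix.det_one_add_smul] at hdet
    set c := Polynomial.eval (π ^ m)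
      (Matrix.det (1 + (Polynomial.X : Polynomial ℤ_[p]) • A.map Polynomial.C)).divX.divX with hc
    have h0 : (Matrix.trace A + c * π ^ m) * π ^ m = 0 := by linear_combination hdet
    rcases mul_eq_zero.mp h0 with h | h
    · exact ⟨-c, by linear_combination h⟩
    · exact absurd h (hπm0 m)
  -- the matrix M₀ := 1 + π^(m-1) • A has determinant ≡ 1 mod p^m, hence a unit
  set M₀ : Matrix (Fin n) (Fin n) ℤ_[p] := 1 + π ^ (m - 1) • A with hM₀
  have hu1 : π ^ m ∣ M₀.det - 1 := by
    rw [hM₀, Matrix.det_one_add_smul]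
    have d1 : π ^ m ∣ Matrix.trace A * π ^ (m - 1) := htrA.mul_right _
    have d2 : π ^ m ∣ Polynomial.eval (π ^ (m - 1))
        (Matrix.det (1 + (Polynomial.X : Polynomial ℤ_[p]) • A.map Polynomial.C)).divX.divX
        * (π ^ (m - 1)) ^ 2 := by
      refine Dvd.dvd.mul_left ?_ _
      rw [← pow_mul]
      exact pow_dvd_pow _ (by omega)
    convert dvd_add d1 d2 using 1
    ring
  have hu : IsUnit M₀.det := by
    obtain ⟨w, hw⟩ := hu1
    rw [PadicInt.isUnit_iff]
    have hlt : ‖M₀.det - 1‖ < 1 := by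
      rw [hw, norm_mul, norm_pow, hπ, PadicInt.norm_p]
      calc ((p:ℝ)⁻¹) ^ m * ‖w‖ ≤ ((p:ℝ)⁻¹) ^ m * 1 := by
            refine mul_le_mul_of_nonneg_left (PadicInt.norm_le_one w) (by positivity)
        _ = ((p:ℝ)⁻¹) ^ m := mul_one _
        _ < 1 := pow_lt_one₀ (by positivity) (inv_lt_one_of_one_lt₀ hπ1) (by omega)
    have hdet1 : M₀.det = 1 + (M₀.det - 1) := by ring
    rw [hdet1, PadicInt.norm_add_eq_max_of_ne (by rw [norm_one]; exact hlt.ne'),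
      norm_one, max_eq_left hlt.le]
  obtain ⟨v, hv⟩ := hu
  -- build the special linear lift h₀ of 1 + π^(m-1) A
  set i0 : Fin n := ⟨0, hn⟩ with hi0
  set d : Fin n → ℤ_[p] := Function.update (fun _ => 1) i0 ((v⁻¹ : ℤ_[p]ˣ) : ℤ_[p]) with hd
  have hprod : ∏ i, d i = ((v⁻¹ : ℤ_[p]ˣ) : ℤ_[p]) := by
    rw [hd, Finset.prod_update_of_mem (Finset.mem_univ i0)]
    simp
  have hdetH : (Matrix.diagonal d * M₀).det = 1 := by
    rw [Matrix.det_mul, Matrix.det_diagonal, hprod, ← hv]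
    exact Units.inv_mul v
  set h₀ : SpecialLinearGroup (Fin n) ℤ_[p] := ⟨Matrix.diagonal d * M₀, hdetH⟩ with hh₀
  have hH : MD p m ((h₀ : Matrix (Fin n) (Fin n) ℤ_[p]) - M₀) := by
    have heq : (h₀ : Matrix (Fin n) (Fin n) ℤ_[p]) - M₀ = (Matrix.diagonal d - 1) * M₀ := by
      rw [Matrix.sub_mul, one_mul]
    rw [heq]
    refine MD.mul_right (fun i j => ?_) _
    rcases eq_or_ne i j with rfl | hij
    · rw [Matrix.sub_apply, Matrix.diagonal_apply_eq, Matrix.one_apply_eq]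
      by_cases hii0 : i = i0
      · have hd0 : d i = ((v⁻¹ : ℤ_[p]ˣ) : ℤ_[p]) := by
          rw [hd, hii0]; exact Function.update_self _ _ _
        have hkey : ((v⁻¹ : ℤ_[p]ˣ) : ℤ_[p]) - 1
            = ((v⁻¹ : ℤ_[p]ˣ) : ℤ_[p]) * (1 - M₀.det) := by
          rw [← hv, mul_sub, mul_one, Units.inv_mul]
        rw [hd0, hkey]
        exact Dvd.dvd.mul_left (by rw [← neg_sub]; exact dvd_neg.mpr hu1) _
      · rw [hd, Function.update_of_ne hii0]
        simp
    · rw [Matrix.sub_apply, Matrix.diagonal_apply_ne _ hij, Matrix.one_apply_ne hij]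
      simp
  obtain ⟨y, hyK, hy⟩ := IH h₀
  have hB : MD p m ((y : Matrix (Fin n) (Fin n) ℤ_[p]) - M₀) := by
    have heq : (y : Matrix (Fin n) (Fin n) ℤ_[p]) - M₀ =
        -((h₀ : Matrix (Fin n) (Fin n) ℤ_[p]) - (y : Matrix (Fin n) (Fin n) ℤ_[p]))
        + ((h₀ : Matrix (Fin n) (Fin n) ℤ_[p]) - M₀) := by abel
    rw [heq]; exact (hy.neg).add hH
  obtain ⟨C, hC⟩ := hB.exists_fac
  set X : Matrix (Fin n) (Fin n) ℤ_[p] := π ^ (m - 1) • A + π ^ m • C with hX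
  have hyX : (y : Matrix (Fin n) (Fin n) ℤ_[p]) = X + 1 := by
    have h5 : (y : Matrix (Fin n) (Fin n) ℤ_[p]) = M₀ + π ^ m • C := by
      rw [← hC]; abel
    rw [h5, hM₀, hX]; abel
  have hXd : MD p (m - 1) X :=
    (MD.smul_pow _ _).add ((MD.smul_pow m C).mono (by omega))
  have hbin := (Commute.one_right X).add_pow p
  set S : Matrix (Fin n) (Fin n) ℤ_[p] :=
    ∑ k ∈ Finset.Ico 2 (p + 1), X ^ k * 1 ^ (p - k) * (p.choose k : Matrix (Fin n) (Fin n) ℤ_[p])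
    with hS
  have hsplit : (X + 1) ^ p = 1 + X * (p : Matrix (Fin n) (Fin n) ℤ_[p]) + S := by
    rw [hbin, Finset.range_eq_Ico,
      Finset.sum_eq_sum_Ico_succ_bot (by omega : 0 < p + 1),
      Finset.sum_eq_sum_Ico_succ_bot (by omega : 1 < p + 1), ← hS]
    simp only [pow_zero, one_pow, one_mul, Nat.choose_zero_right, Nat.cast_one, mul_one,
      Nat.choose_one_right, pow_one]
    abel
  have hXp : (p : Matrix (Fin n) (Fin n) ℤ_[p]) * X = π • X := by
    rw [hπ, Nat.cast_smul_eq_nsmul, nsmul_eq_mul]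
  have hmain : π ^ m • A - X * (p : Matrix (Fin n) (Fin n) ℤ_[p]) = -(π ^ (m + 1) • C) := by
    rw [← (Nat.cast_commute p X).eq, hXp, hX, smul_add, smul_smul, smul_smul]
    have e1 : π * π ^ (m - 1) = π ^ m := by
      rw [← pow_succ']
      congr 1
      omega
    have e2 : π * π ^ m = π ^ (m + 1) := (pow_succ' π m).symm
    rw [e1, e2]
    abel
  have hSd : MD p (m + 1) S := by
    refine MD.sum fun k hk => ?_
    rw [Finset.mem_Ico] at hk
    rcases eq_or_ne k p with hkp | hkp
    · have h3 : MD p (3 * (m - 1)) (X ^ k) := by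
        have h4 := hXd.pow_ge 3 (k - 3)
        rwa [(by omega : 3 + (k - 3) = k)] at h4
      exact ((h3.mul_right _).mul_right _).mono (by omega)
    · obtain ⟨t, ht⟩ :=
        (Nat.Prime.dvd_choose_self Fact.out (by omega) (by omega) : p ∣ p.choose k)
      have h2 : MD p (2 * (m - 1)) (X ^ k * 1 ^ (p - k)) := by
        have h4 := hXd.pow_ge 2 (k - 2)
        rw [(by omega : 2 + (k - 2) = k)] at h4
        exact h4.mul_right _
      have h6 : X ^ k * 1 ^ (p - k) * (p.choose k : Matrix (Fin n) (Fin n) ℤ_[p])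
          = (π • (X ^ k * 1 ^ (p - k))) * (t : Matrix (Fin n) (Fin n) ℤ_[p]) := by
        rw [ht, Nat.cast_mul, ← mul_assoc]
        congr 1
        rw [← (Nat.cast_commute p (X ^ k * 1 ^ (p - k))).eq, hπ, Nat.cast_smul_eq_nsmul,
          nsmul_eq_mul]
      rw [h6]
      exact ((h2.p_smul).mul_right _).mono (by omega)
  refine ⟨y ^ p * x, K.mul_mem (K.pow_mem hyK p) hxK, ?_⟩
  have hgx : (g : Matrix (Fin n) (Fin n) ℤ_[p])
      = ((g * x⁻¹ : SpecialLinearGroup (Fin n) ℤ_[p]) : Matrix (Fin n) (Fin n) ℤ_[p]) *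
        (x : Matrix (Fin n) (Fin n) ℤ_[p]) := by
    rw [← Matrix.SpecialLinearGroup.coe_mul, inv_mul_cancel_right]
  have hyp2 : ((y ^ p * x : SpecialLinearGroup (Fin n) ℤ_[p]) : Matrix (Fin n) (Fin n) ℤ_[p])
      = (X + 1) ^ p * (x : Matrix (Fin n) (Fin n) ℤ_[p]) := by
    rw [Matrix.SpecialLinearGroup.coe_mul, Matrix.SpecialLinearGroup.coe_pow, hyX]
  have hfinal : (g : Matrix (Fin n) (Fin n) ℤ_[p]) -
      ((y ^ p * x : SpecialLinearGroup (Fin n) ℤ_[p]) : Matrix (Fin n) (Fin n) ℤ_[p])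
      = ((π ^ m • A - X * (p : Matrix (Fin n) (Fin n) ℤ_[p])) - S) *
        (x : Matrix (Fin n) (Fin n) ℤ_[p]) := by
    rw [hgx, hyp2, ← Matrix.sub_mul, hEeq, hsplit]
    congr 1
    abel
  rw [hfinal]
  refine MD.mul_right (MD.sub ?_ hSd) _
  rw [hmain]
  exact (MD.smul_pow (m + 1) C).neg

theorem dense_lemma (hp3 : 3 ≤ p) (hn : 1 ≤ n)
    (K : Subgroup (SpecialLinearGroup (Fin n) ℤ_[p]))
    (hsurj : ∀ g : Matrix.SpecialLinearGroup (Fin n) (ZMod (p ^ 2)),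
      ∃ k ∈ K, Matrix.SpecialLinearGroup.map (PadicInt.toZModPow 2) k = g)
    (m : ℕ) (g : SpecialLinearGroup (Fin n) ℤ_[p]) :
    ∃ x ∈ K, MD p m
      ((g : Matrix (Fin n) (Fin n) ℤ_[p]) - (x : Matrix (Fin n) (Fin n) ℤ_[p])) := by
  have H : ∀ m', 2 ≤ m' → ∀ g : SpecialLinearGroup (Fin n) ℤ_[p], ∃ x ∈ K, MD p m'
      ((g : Matrix (Fin n) (Fin n) ℤ_[p]) - (x : Matrix (Fin n) (Fin n) ℤ_[p])) := by
    intro m' hm'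
    induction m', hm' using Nat.le_induction with
    | base => exact base K hsurj
    | succ m' hm' ih => exact key_step hp3 hn hm' K ih
  obtain ⟨x, hxK, hxd⟩ := H (max m 2) (le_max_right _ _) g
  exact ⟨x, hxK, hxd.mono (le_max_left _ _)⟩

end Stmt2Aux

-- auxiliary development above; original declarations follow.

/-- The `p`-adic topology on `SL_n(ℤ_p)`, induced from the product topology on matrices. -/
instance SLtop (p : ℕ) [Fact p.Prime] (n : ℕ) :
    TopologicalSpace (Matrix.SpecialLinearGroup (Fin n) ℤ_[p]) :=
  inferInstanceAs (TopologicalSpace { A : Matrix (Fin n) (Fin n) ℤ_[p] // A.det = 1 })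

/-- Let `p` be an odd prime and `n ≥ 1`. If `K` is a closed subgroup of
`SL_n(ℤ_p)` whose image under the reduction map `SL_n(ℤ_p) → SL_n(ℤ/p²ℤ)` is all of
`SL_n(ℤ/p²ℤ)`, then `K = ⊤`. -/
theorem stmt2 (p : ℕ) [Fact p.Prime] (hp : Odd p) (n : ℕ) (hn : 1 ≤ n)
    (K : Subgroup (Matrix.SpecialLinearGroup (Fin n) ℤ_[p]))
    (hclosed : IsClosed (K : Set (Matrix.SpecialLinearGroup (Fin n) ℤ_[p])))
    (hsurj : ∀ g : Matrix.SpecialLinearGroup (Fin n) (ZMod (p ^ 2)),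
      ∃ k ∈ K, Matrix.SpecialLinearGroup.map (PadicInt.toZModPow 2) k = g) :
    K = ⊤ := by
  have hp3 : 3 ≤ p := by
    obtain ⟨k, hk⟩ := hp
    have := (Fact.out : p.Prime).two_le
    omega
  rw [Subgroup.eq_top_iff']
  intro g
  choose x hxK hxd using fun m => Stmt2Aux.dense_lemma hp3 hn K hsurj m g
  have htends : Filter.Tendsto (fun m => x m) Filter.atTop (nhds g) := by
    have hind : Topology.IsInducing
        (fun a : Matrix.SpecialLinearGroup (Fin n) ℤ_[p] =>
          (a : Matrix (Fin n) (Fin n) ℤ_[p])) := ⟨rfl⟩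
    rw [hind.tendsto_nhds_iff]
    refine tendsto_pi_nhds.mpr fun i => tendsto_pi_nhds.mpr fun j => ?_
    rw [tendsto_iff_dist_tendsto_zero]
    refine squeeze_zero (fun _ => dist_nonneg) (g := fun m => ((p : ℝ)⁻¹) ^ m) (fun m => ?_) ?_
    · rw [dist_eq_norm, ← norm_neg, neg_sub]
      have hmem : ((g : Matrix (Fin n) (Fin n) ℤ_[p]) i j
          - (x m : Matrix (Fin n) (Fin n) ℤ_[p]) i j)
          ∈ Ideal.span {(p : ℤ_[p]) ^ m} := by
        rw [Ideal.mem_span_singleton]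
        exact (hxd m) i j
      have := (PadicInt.norm_le_pow_iff_mem_span_pow _ m).mpr hmem
      calc ‖(g : Matrix (Fin n) (Fin n) ℤ_[p]) i j
            - (x m : Matrix (Fin n) (Fin n) ℤ_[p]) i j‖ ≤ (p : ℝ) ^ (-(m:ℤ)) := this
        _ = ((p : ℝ)⁻¹) ^ m := by
            rw [_root_.zpow_neg, inv_pow, zpow_natCast]
    · refine tendsto_pow_atTop_nhds_zero_of_lt_one (by positivity) ?_
      refine inv_lt_one_of_one_lt₀ ?_
      exact_mod_cast (by omega : 1 < p)
  have hclg : g ∈ closure (K : Set (Matrix.SpecialLinearGroup (Fin n) ℤ_[p])) :=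
    mem_closure_of_tendsto htends (Filter.Eventually.of_forall fun m => hxK m)
  rwa [hclosed.closure_eq] at hclg
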